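/- Let S ⊆ ℝⁿ be an arbitrary closed set and μ a finite Borel measure with supp μ = S such that x ↦ exp(|x_i|) is μ-integrable for every i = 1,…,n. Then a polynomial f ∈ ℝ[x] is nonnegative on S if and only if ∫ σ·f dμ ≥ 0 for every sum of squares σ ∈ Σ[x]. -/

import Mathlib

open MeasureTheory MvPolynomial

/-- Support of a Borel measure: points all of whose open neighborhoods have
positive measure (the smallest closed set of full measure). -/
def msupport {n : ℕ} (μ : Measure (Fin n → ℝ)) : Set (Fin n → ℝ) :=
  {x | ∀ U : Set (Fin n → ℝ), IsOpen U → x ∈ U → μ U ≠ 0}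

/-- A polynomial is a sum of squares. -/
def IsSOS {n : ℕ} (σ : MvPolynomial (Fin n) ℝ) : Prop :=
  ∃ (k : ℕ) (p : Fin k → MvPolynomial (Fin n) ℝ), σ = ∑ i, (p i) ^ 2

set_option linter.all false

namespace Stmt1Aux
open Real Filter Finset Topology


/-- regularized sinc-type function -/
noncomputable def usin (t s : ℝ) : ℝ := if s = 0 then t else Real.sin (t*s)/s

/-- polynomial partial sums -/
noncomputable def psin (t : ℝ) (m : ℕ) (s : ℝ) : ℝ :=
  ∑ j ∈ Finset.range (m+1), ((-1:ℝ)^j * t^(2*j+1) / ((2*j+1).factorial : ℝ)) * s^(2*j)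

lemma psin_zero (t : ℝ) (m : ℕ) : psin t m 0 = t := by
  unfold psin
  rw [Finset.sum_eq_single 0]
  · norm_num
  · intro j hj hj0
    have : (0:ℝ)^(2*j) = 0 := by
      apply zero_pow; omega
    rw [this, mul_zero]
  · intro h; simp at h

lemma psin_tendsto (t s : ℝ) : Tendsto (fun m => psin t m s) atTop (𝓝 (usin t s)) := by
  rcases eq_or_ne s 0 with rfl | hs
  · simp only [psin_zero, usin, if_pos rfl]
    exact tendsto_const_nhds
  · have h := (Real.hasSum_sin (t*s)).tendsto_sum_nat
    have h2 : Tendsto (fun m : ℕ => (∑ j ∈ Finset.range m, (-1:ℝ)^j * (t*s)^(2*j+1) / ((2*j+1).factorial : ℝ)) / s) atTop (𝓝 (Real.sin (t*s) / s)) := h.div_const s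
    have h3 : Tendsto (fun m : ℕ => (∑ j ∈ Finset.range (m+1), (-1:ℝ)^j * (t*s)^(2*j+1) / ((2*j+1).factorial : ℝ)) / s) atTop (𝓝 (Real.sin (t*s) / s)) := h2.comp (tendsto_add_atTop_nat 1)
    have heq : (fun m : ℕ => (∑ j ∈ Finset.range (m+1), (-1:ℝ)^j * (t*s)^(2*j+1) / ((2*j+1).factorial : ℝ)) / s) = fun m => psin t m s := by
      funext m
      rw [Finset.sum_div]
      apply Finset.sum_congr rfl
      intro j _
      rw [mul_pow]
      field_simp
      ring
    rw [show usin t s = Real.sin (t*s)/s from if_neg hs]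
    exact heq ▸ h3

lemma psin_abs_le {t : ℝ} (ht : 0 ≤ t) (m : ℕ) (s : ℝ) :
    |psin t m s| ≤ t * Real.exp (t * |s|) := by
  have h1 : |psin t m s| ≤ ∑ j ∈ Finset.range (m+1), t * (t*|s|)^(2*j) / ((2*j).factorial : ℝ) := by
    refine (Finset.abs_sum_le_sum_abs _ _).trans (Finset.sum_le_sum ?_)
    intro j _
    have e0 : |((-1:ℝ)^j * t^(2*j+1) / ((2*j+1).factorial : ℝ)) * s^(2*j)|
        = t * (t*|s|)^(2*j) / ((2*j+1).factorial : ℝ) := by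
      rw [abs_mul, abs_div, abs_mul, abs_pow (-1:ℝ), abs_pow s, abs_pow t, abs_neg, abs_one,
        one_pow, one_mul, abs_of_nonneg ht, Nat.abs_cast, mul_pow]
      ring
    rw [e0]
    apply div_le_div_of_nonneg_left _ _ _
    · positivity
    · positivity
    · exact_mod_cast Nat.factorial_le (by omega : 2*j ≤ 2*j+1)
  refine h1.trans ?_
  have h2 : ∑ j ∈ Finset.range (m+1), t * (t*|s|)^(2*j) / ((2*j).factorial : ℝ)
      = t * ∑ j ∈ Finset.range (m+1), (t*|s|)^(2*j) / ((2*j).factorial : ℝ) := by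
    rw [Finset.mul_sum]; apply Finset.sum_congr rfl; intros; ring
  rw [h2]
  apply mul_le_mul_of_nonneg_left _ ht
  have hu : 0 ≤ t * |s| := by positivity
  calc ∑ j ∈ Finset.range (m+1), (t*|s|)^(2*j) / ((2*j).factorial : ℝ)
      = ∑ k ∈ (Finset.range (m+1)).image (fun j => 2*j), (t*|s|)^k / (k.factorial : ℝ) := by
        rw [Finset.sum_image]
        intro a _ b _ hab; simp only at hab; omega
    _ ≤ ∑ k ∈ Finset.range (2*m+2), (t*|s|)^k / (k.factorial : ℝ) := by
        apply Finset.sum_le_sum_of_subset_of_nonneg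
        · intro k hk
          simp only [Finset.mem_image, Finset.mem_range] at hk ⊢
          obtain ⟨j, hj, rfl⟩ := hk; omega
        · intros; positivity
    _ ≤ Real.exp (t*|s|) := Real.sum_le_exp_of_nonneg hu _

lemma usin_abs_le {t : ℝ} (ht : 0 ≤ t) (s : ℝ) : |usin t s| ≤ t := by
  unfold usin
  split_ifs with h
  · rw [abs_of_nonneg ht]
  · rw [abs_div]
    rw [div_le_iff₀ (abs_pos.2 h)]
    calc |Real.sin (t*s)| ≤ |t*s| := Real.abs_sin_le_abs
      _ = t * |s| := by rw [abs_mul, abs_of_nonneg ht]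

lemma usin_eq_abs {t s : ℝ} (hs : s ≠ 0) : usin t s = Real.sin (t*|s|)/|s| := by
  unfold usin
  rw [if_neg hs]
  rcases abs_cases s with ⟨h1, _⟩ | ⟨h1, _⟩
  · rw [h1]
  · rw [h1]
    rw [mul_neg, Real.sin_neg]
    field_simp

lemma usin_lower {t s : ℝ} (ht : 0 < t) (h1 : t * |s| ≤ 1) :
    t - t^3 * s^2 / 4 ≤ usin t s := by
  rcases eq_or_ne s 0 with rfl | hs
  · simp [usin, ht.le]
  · rw [usin_eq_abs hs]
    have hsa : 0 < |s| := abs_pos.2 hs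
    have hv : 0 < t * |s| := by positivity
    have key : t*|s| - (t*|s|)^3/4 < Real.sin (t*|s|) := by
      have := Real.sin_gt_sub_cube hv; have := pow_pos hv 3; linarith
    have h2 : (t - t^3*s^2/4) * |s| ≤ Real.sin (t*|s|) := by
      have e : (t - t^3*s^2/4) * |s| = t*|s| - (t*|s|)^3/4 := by
        rw [mul_pow]
        have : |s|^3 = s^2 * |s| := by
          rw [pow_succ, sq_abs]
        rw [this]; ring
      rw [e]; exact key.le
    rw [le_div_iff₀ hsa]
    exact h2

lemma abs_sin_le_mul {v v0 : ℝ} (h0 : 0 < v0) (h1 : v0 ≤ 1) (hv : v0 ≤ v) :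
    |Real.sin v| ≤ v * (1 - v0^2/20) := by
  have hv0 : 0 < v := lt_of_lt_of_le h0 hv
  have hpi : (3.14 : ℝ) < Real.pi := Real.pi_gt_d6.trans_le' (by norm_num)
  rcases le_or_gt v 2 with h2 | h2
  · have hsin2 : Real.sin v = 2 * Real.sin (v/2) * Real.cos (v/2) := by
      have h := Real.sin_two_mul (v/2)
      rw [show 2*(v/2) = v by ring] at h
      exact h
    have hcosnn : 0 ≤ Real.cos (v/2) := by
      apply Real.cos_nonneg_of_mem_Icc
      constructor <;> [linarith; linarith]
    have habs : |Real.sin v| ≤ v * Real.cos (v/2) := by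
      rw [hsin2, abs_mul, abs_mul, abs_of_nonneg hcosnn, abs_two]
      have h3 : |Real.sin (v/2)| ≤ v/2 := by
        calc |Real.sin (v/2)| ≤ |v/2| := Real.abs_sin_le_abs
          _ = v/2 := abs_of_nonneg (by linarith)
      calc 2 * |Real.sin (v/2)| * Real.cos (v/2) ≤ 2 * (v/2) * Real.cos (v/2) := by
            apply mul_le_mul_of_nonneg_right _ hcosnn
            linarith
        _ = v * Real.cos (v/2) := by ring
    refine habs.trans ?_
    apply mul_le_mul_of_nonneg_left _ hv0.le
    have hcos : Real.cos (v/2) ≤ 1 - 2/Real.pi^2 * (v/2)^2 := by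
      apply Real.cos_le_one_sub_mul_cos_sq
      rw [abs_of_nonneg (by linarith : (0:ℝ) ≤ v/2)]
      linarith
    refine hcos.trans ?_
    have hpisq : Real.pi^2 ≤ 10 := by nlinarith [Real.pi_lt_d2]
    have : v0^2/20 ≤ 2/Real.pi^2 * (v/2)^2 := by
      have hvv : v0^2 ≤ v^2 := by nlinarith
      have hp2 : 0 < Real.pi^2 := by positivity
      rw [div_mul_eq_mul_div, le_div_iff₀ hp2]
      nlinarith
    linarith
  · have h3 : |Real.sin v| ≤ 1 := Real.abs_sin_le_one v
    refine h3.trans ?_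
    have hv02 : v0^2 ≤ 1 := by nlinarith
    nlinarith

lemma usin_gap {t ρ s : ℝ} (ht : 0 < t) (hρ : 0 < ρ) (h1 : t * ρ ≤ 1) (hs : ρ ≤ |s|) :
    |usin t s| ≤ t * (1 - (t*ρ)^2/20) := by
  have hs0 : s ≠ 0 := by
    intro h; rw [h] at hs; simp at hs; linarith
  rw [usin_eq_abs hs0]
  have hsa : 0 < |s| := abs_pos.2 hs0
  rw [abs_div, abs_of_nonneg hsa.le, div_le_iff₀ hsa]
  have hkey := abs_sin_le_mul (v := t*|s|) (v0 := t*ρ) (by positivity) h1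
    (by apply mul_le_mul_of_nonneg_left hs ht.le)
  refine hkey.trans_eq (by ring)



lemma poly_growth {n : ℕ} (p : MvPolynomial (Fin n) ℝ) :
    ∀ ε : ℝ, 0 < ε → ∃ C : ℝ, 0 ≤ C ∧ ∀ x : Fin n → ℝ,
      |eval x p| ≤ C * Real.exp (ε * ∑ i, |x i|) := by
  induction p using MvPolynomial.induction_on with
  | C a =>
    intro ε hε
    refine ⟨|a|, abs_nonneg a, fun x => ?_⟩
    rw [eval_C]
    have h1 : (1:ℝ) ≤ Real.exp (ε * ∑ i, |x i|) := by
      rw [Real.one_le_exp_iff]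
      positivity
    nlinarith [abs_nonneg a]
  | add p q hp hq =>
    intro ε hε
    obtain ⟨Cp, hCp0, hCp⟩ := hp ε hε
    obtain ⟨Cq, hCq0, hCq⟩ := hq ε hε
    refine ⟨Cp + Cq, by linarith, fun x => ?_⟩
    rw [map_add]
    calc |eval x p + eval x q| ≤ |eval x p| + |eval x q| := abs_add_le _ _
      _ ≤ Cp * Real.exp (ε * ∑ i, |x i|) + Cq * Real.exp (ε * ∑ i, |x i|) :=
          add_le_add (hCp x) (hCq x)
      _ = (Cp + Cq) * Real.exp (ε * ∑ i, |x i|) := by ring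
  | mul_X p i hp =>
    intro ε hε
    obtain ⟨Cp, hCp0, hCp⟩ := hp (ε/2) (by linarith)
    refine ⟨Cp * (2/ε), by positivity, fun x => ?_⟩
    rw [map_mul, eval_X, abs_mul]
    have h1 : |x i| ≤ (2/ε) * Real.exp ((ε/2) * |x i|) := by
      have h2 := Real.add_one_le_exp ((ε/2) * |x i|)
      have h3 : (ε/2) * |x i| ≤ Real.exp ((ε/2) * |x i|) := by linarith
      calc |x i| = ((ε/2) * |x i|) * (2/ε) := by field_simp
        _ ≤ Real.exp ((ε/2) * |x i|) * (2/ε) :=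
            mul_le_mul_of_nonneg_right h3 (by positivity)
        _ = (2/ε) * Real.exp ((ε/2) * |x i|) := by ring
    have h4 : |x i| ≤ ∑ j, |x j| :=
      Finset.single_le_sum (f := fun j => |x j|) (fun j _ => abs_nonneg _) (Finset.mem_univ i)
    have h5 : Real.exp ((ε/2) * |x i|) ≤ Real.exp ((ε/2) * ∑ j, |x j|) := by
      apply Real.exp_le_exp.2
      apply mul_le_mul_of_nonneg_left h4 (by linarith)
    calc |eval x p| * |x i|
        ≤ (Cp * Real.exp ((ε/2) * ∑ j, |x j|)) * ((2/ε) * Real.exp ((ε/2) * ∑ j, |x j|)) := by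
          apply mul_le_mul (hCp x) (h1.trans _) (abs_nonneg _) (by positivity)
          apply mul_le_mul_of_nonneg_left h5 (by positivity)
      _ = Cp * (2/ε) * (Real.exp ((ε/2) * ∑ j, |x j|) * Real.exp ((ε/2) * ∑ j, |x j|)) := by ring
      _ = Cp * (2/ε) * Real.exp (ε * ∑ j, |x j|) := by
          rw [← Real.exp_add]; ring_nf

section
variable {n : ℕ}

lemma exp_sum_le {β : ℝ} (hβ : 0 ≤ β) (hβn : β * n ≤ 1) (x : Fin n → ℝ) :
    Real.exp (β * ∑ i, |x i|) ≤ 1 + ∑ i, Real.exp (|x i|) := by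
  rcases Nat.eq_zero_or_pos n with rfl | hn
  · simp
  · have hne : (Finset.univ : Finset (Fin n)).Nonempty := by
      rw [Finset.univ_nonempty_iff]
      exact Fin.pos_iff_nonempty.1 hn
    obtain ⟨i0, _, hi0⟩ := Finset.exists_max_image Finset.univ (fun i => |x i|) hne
    have h1 : ∑ i, |x i| ≤ n * |x i0| := by
      calc ∑ i, |x i| ≤ Finset.univ.card • |x i0| :=
            Finset.sum_le_card_nsmul _ _ _ (fun i _ => hi0 i (Finset.mem_univ i))
        _ = n * |x i0| := by
            rw [Finset.card_univ, Fintype.card_fin, nsmul_eq_mul]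
    have h2 : β * ∑ i, |x i| ≤ |x i0| := by
      calc β * ∑ i, |x i| ≤ β * (n * |x i0|) :=
            mul_le_mul_of_nonneg_left h1 hβ
        _ = (β * n) * |x i0| := by ring
        _ ≤ 1 * |x i0| := mul_le_mul_of_nonneg_right hβn (abs_nonneg _)
        _ = |x i0| := one_mul _
    calc Real.exp (β * ∑ i, |x i|) ≤ Real.exp (|x i0|) := Real.exp_le_exp.2 h2
      _ ≤ ∑ i, Real.exp (|x i|) :=
          Finset.single_le_sum (f := fun i => Real.exp (|x i|))
            (fun i _ => (Real.exp_pos _).le) (Finset.mem_univ i0)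
      _ ≤ 1 + ∑ i, Real.exp (|x i|) := by linarith

variable {μ : Measure (Fin n → ℝ)} [IsFiniteMeasure μ]

lemma integrable_master (hexp : ∀ i : Fin n, Integrable (fun x => Real.exp |x i|) μ) :
    Integrable (fun x : Fin n → ℝ => 1 + ∑ i, Real.exp (|x i|)) μ :=
  (integrable_const 1).add (integrable_finset_sum _ fun i _ => hexp i)

lemma continuous_abs_eval (p : MvPolynomial (Fin n) ℝ) :
    Continuous (fun x : Fin n → ℝ => |eval x p|) :=
  (MvPolynomial.continuous_eval p).abs

lemma continuous_exp_sum (β : ℝ) :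
    Continuous (fun x : Fin n → ℝ => Real.exp (β * ∑ i, |x i|)) :=
  Real.continuous_exp.comp
    ((continuous_const.mul (continuous_finset_sum _ fun i _ => (continuous_apply i).abs)))

lemma integrable_poly_exp (hexp : ∀ i : Fin n, Integrable (fun x => Real.exp |x i|) μ)
    (p : MvPolynomial (Fin n) ℝ) {β : ℝ} (hβ0 : 0 ≤ β) (hβ : β ≤ 1/(2*((n:ℝ)+1))) :
    Integrable (fun x => |eval x p| * Real.exp (β * ∑ i, |x i|)) μ := by
  have hn1 : (0:ℝ) < (n:ℝ) + 1 := by positivity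
  have hε : (0:ℝ) < 1/(2*((n:ℝ)+1)) := by positivity
  obtain ⟨C, hC0, hC⟩ := poly_growth p (1/(2*((n:ℝ)+1))) hε
  apply Integrable.mono' ((integrable_master hexp).const_mul C)
  · exact ((continuous_abs_eval p).mul (continuous_exp_sum β)).aestronglyMeasurable
  · apply Filter.Eventually.of_forall
    intro x
    have hnn : (0:ℝ) ≤ |eval x p| * Real.exp (β * ∑ i, |x i|) := by positivity
    rw [Real.norm_eq_abs, abs_of_nonneg hnn]
    have hsum : (0:ℝ) ≤ ∑ i, |x i| := Finset.sum_nonneg fun i _ => abs_nonneg _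
    have h1 : Real.exp (β * ∑ i, |x i|) ≤ Real.exp ((1/(2*((n:ℝ)+1))) * ∑ i, |x i|) :=
      Real.exp_le_exp.2 (mul_le_mul_of_nonneg_right hβ hsum)
    have h2 : |eval x p| * Real.exp (β * ∑ i, |x i|)
        ≤ C * Real.exp ((1/((n:ℝ)+1)) * ∑ i, |x i|) := by
      calc |eval x p| * Real.exp (β * ∑ i, |x i|)
          ≤ (C * Real.exp ((1/(2*((n:ℝ)+1))) * ∑ i, |x i|)) * Real.exp ((1/(2*((n:ℝ)+1))) * ∑ i, |x i|) :=
            mul_le_mul (hC x) h1 (Real.exp_pos _).le (by positivity)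
        _ = C * Real.exp ((1/(2*((n:ℝ)+1))) * ∑ i, |x i| + (1/(2*((n:ℝ)+1))) * ∑ i, |x i|) := by
            rw [Real.exp_add]; ring
        _ = C * Real.exp ((1/((n:ℝ)+1)) * ∑ i, |x i|) := by
            congr 2; field_simp; ring
    refine h2.trans (mul_le_mul_of_nonneg_left (exp_sum_le (by positivity) ?_ x) hC0)
    rw [div_mul_eq_mul_div, div_le_one hn1]
    linarith

lemma integrable_poly (hexp : ∀ i : Fin n, Integrable (fun x => Real.exp |x i|) μ)
    (p : MvPolynomial (Fin n) ℝ) :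
    Integrable (fun x => eval x p) μ := by
  apply Integrable.mono' (integrable_poly_exp hexp p (β := 0) le_rfl (by positivity))
  · exact (MvPolynomial.continuous_eval p).aestronglyMeasurable
  · apply Filter.Eventually.of_forall
    intro x
    rw [Real.norm_eq_abs]
    simp
end



variable {n : ℕ}

lemma sos_eval_nonneg {σ : MvPolynomial (Fin n) ℝ} (hσ : IsSOS σ) (x : Fin n → ℝ) :
    0 ≤ eval x σ := by
  obtain ⟨k, p, rfl⟩ := hσ
  rw [map_sum]
  apply Finset.sum_nonneg
  intro i _
  rw [map_pow]
  positivity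

lemma sos_mul_sq {σ : MvPolynomial (Fin n) ℝ} (hσ : IsSOS σ) (P : MvPolynomial (Fin n) ℝ) :
    IsSOS (σ * P^2) := by
  obtain ⟨k, p, rfl⟩ := hσ
  exact ⟨k, fun i => p i * P, by
    rw [Finset.sum_mul]
    exact Finset.sum_congr rfl fun i _ => (mul_pow _ _ 2).symm⟩

lemma isSOS_one : IsSOS (1 : MvPolynomial (Fin n) ℝ) :=
  ⟨1, fun _ => 1, by simp⟩

lemma msupport_compl_null (μ : Measure (Fin n → ℝ)) : μ (msupport μ)ᶜ = 0 := by
  set 𝒰 : Set (Set (Fin n → ℝ)) := {U | IsOpen U ∧ μ U = 0} with h𝒰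
  obtain ⟨T, hTc, hTsub, hTU⟩ :=
    TopologicalSpace.isOpen_sUnion_countable 𝒰 (fun s hs => hs.1)
  have h1 : μ (⋃₀ 𝒰) = 0 := by
    rw [← hTU]
    exact (measure_sUnion_null_iff hTc).2 fun s hs => (hTsub hs).2
  apply measure_mono_null _ h1
  intro x hx
  simp only [Set.mem_compl_iff, msupport, Set.mem_setOf_eq] at hx
  push_neg at hx
  obtain ⟨U, hUo, hxU, hU0⟩ := hx
  exact ⟨U, ⟨hUo, hU0⟩, hxU⟩

section
open Real Filter Finset Topology
variable {n : ℕ}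

lemma measurable_usin (t : ℝ) : Measurable (usin t) := by
  unfold usin
  apply Measurable.ite
  · exact measurableSet_eq
  · exact measurable_const
  · exact (Real.measurable_sin.comp (measurable_id.const_mul t)).div measurable_id

lemma measurable_hfun (t : ℝ) (x₀ : Fin n → ℝ) :
    Measurable (fun x : Fin n → ℝ => ∏ i, (usin t (x i - x₀ i))^2) := by
  apply Finset.measurable_prod
  intro i _
  exact ((measurable_usin t).comp ((measurable_pi_apply i).sub measurable_const)).pow_const 2

lemma hfun_nonneg (t : ℝ) (x₀ x : Fin n → ℝ) :
    0 ≤ ∏ i, (usin t (x i - x₀ i))^2 :=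
  Finset.prod_nonneg fun i _ => sq_nonneg _

lemma hfun_le {t : ℝ} (ht : 0 ≤ t) (x₀ x : Fin n → ℝ) :
    ∏ i, (usin t (x i - x₀ i))^2 ≤ t^(2*n) := by
  calc ∏ i, (usin t (x i - x₀ i))^2 ≤ ∏ _i : Fin n, t^2 := by
        apply Finset.prod_le_prod (fun i _ => sq_nonneg _)
        intro i _
        rw [← sq_abs]
        exact pow_le_pow_left₀ (abs_nonneg _) (usin_abs_le ht _) 2
    _ = t^(2*n) := by
        rw [Finset.prod_const, Finset.card_univ, Fintype.card_fin, ← pow_mul]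

lemma abs_eval_Pm_le {t : ℝ} (ht : 0 ≤ t) (x₀ x : Fin n → ℝ) (m : ℕ) :
    |∏ i, psin t m (x i - x₀ i)|
      ≤ t^n * (Real.exp (t * ∑ i, |x₀ i|) * Real.exp (t * ∑ i, |x i|)) := by
  rw [Finset.abs_prod]
  calc ∏ i, |psin t m (x i - x₀ i)|
      ≤ ∏ i, (t * Real.exp (t * |x i - x₀ i|)) := by
        apply Finset.prod_le_prod (fun i _ => abs_nonneg _)
        intro i _
        exact psin_abs_le ht m _
    _ ≤ ∏ i, (t * Real.exp (t * (|x i| + |x₀ i|))) := by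
        apply Finset.prod_le_prod
        · intro i _; positivity
        · intro i _
          apply mul_le_mul_of_nonneg_left _ ht
          apply Real.exp_le_exp.2
          apply mul_le_mul_of_nonneg_left _ ht
          exact (abs_sub _ _).trans_eq rfl
    _ = t^n * (Real.exp (t * ∑ i, |x₀ i|) * Real.exp (t * ∑ i, |x i|)) := by
        rw [Finset.prod_mul_distrib, Finset.prod_const, Finset.card_univ, Fintype.card_fin]
        congr 1
        rw [← Real.exp_sum, ← Real.exp_add]
        congr 1
        rw [Finset.mul_sum, Finset.mul_sum, ← Finset.sum_add_distrib]
        apply Finset.sum_congr rfl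
        intros; ring

variable {μ : Measure (Fin n → ℝ)} [IsFiniteMeasure μ]

lemma bootstrap (hexp : ∀ i : Fin n, Integrable (fun x => Real.exp |x i|) μ)
    (f : MvPolynomial (Fin n) ℝ) (x₀ : Fin n → ℝ) {t : ℝ} (ht0 : 0 < t)
    (ht : 2*t ≤ 1/(2*((n:ℝ)+1)))
    (hmom : ∀ σ : MvPolynomial (Fin n) ℝ, IsSOS σ → 0 ≤ ∫ x, eval x σ * eval x f ∂μ)
    (k : ℕ) :
    ∀ σ : MvPolynomial (Fin n) ℝ, IsSOS σ →
      0 ≤ ∫ x, eval x σ * ((∏ i, (usin t (x i - x₀ i))^2)^k * eval x f) ∂μ := by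
  induction k with
  | zero =>
    intro σ hσ
    simpa using hmom σ hσ
  | succ k IH =>
    intro σ hσ
    set hf : (Fin n → ℝ) → ℝ := fun x => ∏ i, (usin t (x i - x₀ i))^2 with hhf
    -- the approximating polynomials
    set Pm : ℕ → MvPolynomial (Fin n) ℝ := fun m =>
      ∏ i, (∑ j ∈ Finset.range (m+1),
        MvPolynomial.C ((-1:ℝ)^j * t^(2*j+1) / ((2*j+1).factorial : ℝ)) * (X i - C (x₀ i))^(2*j))
      with hPm
    have heval : ∀ m x, eval x (Pm m) = ∏ i, psin t m (x i - x₀ i) := by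
      intro m x
      rw [hPm, map_prod]
      apply Finset.prod_congr rfl
      intro i _
      rw [map_sum]
      unfold psin
      apply Finset.sum_congr rfl
      intro j _
      rw [map_mul, eval_C, map_pow, map_sub, eval_X, eval_C]
    set F : ℕ → (Fin n → ℝ) → ℝ := fun m x =>
      eval x (σ * (Pm m)^2) * ((hf x)^k * eval x f) with hF
    have h0 : ∀ m, 0 ≤ ∫ x, F m x ∂μ := fun m => IH (σ * (Pm m)^2) (sos_mul_sq hσ _)
    -- dominated convergence
    set D : ℝ := (t^n)^2 * (Real.exp (t * ∑ i, |x₀ i|))^2 * (t^(2*n))^k with hD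
    have hD0 : 0 ≤ D := by positivity
    set bound : (Fin n → ℝ) → ℝ := fun x =>
      D * (|eval x (σ * f)| * Real.exp (2*t * ∑ i, |x i|)) with hbound
    have hbound_int : Integrable bound μ :=
      (integrable_poly_exp hexp (σ * f) (by linarith) ht).const_mul D
    have hFmeas : ∀ m, AEStronglyMeasurable (F m) μ := by
      intro m
      apply Measurable.aestronglyMeasurable
      exact ((MvPolynomial.continuous_eval _).measurable).mul
        (((measurable_hfun t x₀).pow_const k).mul (MvPolynomial.continuous_eval f).measurable)
    have hFbound : ∀ m, ∀ᵐ x ∂μ, ‖F m x‖ ≤ bound x := by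
      intro m
      apply Filter.Eventually.of_forall
      intro x
      rw [Real.norm_eq_abs, hF]
      have e1 : |eval x (σ * (Pm m)^2) * ((hf x)^k * eval x f)|
          = |eval x σ| * |eval x (Pm m)|^2 * ((hf x)^k * |eval x f|) := by
        rw [map_mul, map_pow, abs_mul, abs_mul, abs_mul, abs_pow,
          abs_of_nonneg (pow_nonneg (hfun_nonneg t x₀ x) k)]
        try ring
      rw [e1]
      have h2 : |eval x (Pm m)|^2
          ≤ (t^n)^2 * ((Real.exp (t * ∑ i, |x₀ i|))^2 * (Real.exp (t * ∑ i, |x i|))^2) := by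
        have := abs_eval_Pm_le ht0.le x₀ x m
        rw [heval m x] at *
        calc |∏ i, psin t m (x i - x₀ i)|^2
            ≤ (t^n * (Real.exp (t * ∑ i, |x₀ i|) * Real.exp (t * ∑ i, |x i|)))^2 :=
              pow_le_pow_left₀ (abs_nonneg _) this 2
          _ = (t^n)^2 * ((Real.exp (t * ∑ i, |x₀ i|))^2 * (Real.exp (t * ∑ i, |x i|))^2) := by
              ring
      have h3 : (hf x)^k ≤ (t^(2*n))^k :=
        pow_le_pow_left₀ (hfun_nonneg t x₀ x) (hfun_le ht0.le x₀ x) k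
      have h4 : (Real.exp (t * ∑ i, |x i|))^2 = Real.exp (2*t * ∑ i, |x i|) := by
        rw [← Real.exp_nat_mul]
        congr 1
        push_cast
        ring
      rw [hbound]
      have h5 : |eval x σ| * |eval x f| = |eval x (σ * f)| := by
        rw [map_mul, abs_mul]
      calc |eval x σ| * |eval x (Pm m)|^2 * ((hf x)^k * |eval x f|)
          ≤ |eval x σ| * ((t^n)^2 * ((Real.exp (t * ∑ i, |x₀ i|))^2 * (Real.exp (t * ∑ i, |x i|))^2))
              * ((t^(2*n))^k * |eval x f|) := by
            apply mul_le_mul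
            · exact mul_le_mul_of_nonneg_left h2 (abs_nonneg _)
            · exact mul_le_mul_of_nonneg_right h3 (abs_nonneg _)
            · positivity
            · positivity
        _ = D * ((|eval x σ| * |eval x f|) * (Real.exp (t * ∑ i, |x i|))^2) := by
            rw [hD]; ring
        _ = D * (|eval x (σ * f)| * Real.exp (2*t * ∑ i, |x i|)) := by
            rw [h5, h4]
    have hFlim : ∀ᵐ x ∂μ, Tendsto (fun m => F m x) atTop
        (𝓝 (eval x σ * ((hf x)^(k+1) * eval x f))) := by
      apply Filter.Eventually.of_forall
      intro x
      have hp : Tendsto (fun m => ∏ i, psin t m (x i - x₀ i)) atTop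
          (𝓝 (∏ i, usin t (x i - x₀ i))) :=
        tendsto_finset_prod _ (fun i _ => psin_tendsto t (x i - x₀ i))
      have hp2 : Tendsto (fun m => (∏ i, psin t m (x i - x₀ i))^2) atTop (𝓝 (hf x)) := by
        have := hp.pow 2
        rwa [← Finset.prod_pow] at this
      have hFeq : ∀ m, F m x = (∏ i, psin t m (x i - x₀ i))^2 * (eval x σ * ((hf x)^k * eval x f)) := by
        intro m
        simp only [hF, map_mul, map_pow, heval m x]
        ring
      simp only [hFeq]
      have := hp2.mul_const (eval x σ * ((hf x)^k * eval x f))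
      convert this using 2
      ring
    have hlim := tendsto_integral_of_dominated_convergence bound hFmeas hbound_int hFbound hFlim
    exact ge_of_tendsto' hlim h0
end

end Stmt1Aux

set_option maxHeartbeats 2000000 in
open Real Filter Finset Topology in
theorem stmt1 {n : ℕ} (S : Set (Fin n → ℝ)) (hS : IsClosed S)
    (μ : Measure (Fin n → ℝ)) [IsFiniteMeasure μ]
    (hsupp : msupport μ = S)
    (hexp : ∀ i : Fin n, Integrable (fun x => Real.exp |x i|) μ)
    (f : MvPolynomial (Fin n) ℝ) :
    (∀ x ∈ S, 0 ≤ eval x f) ↔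
      ∀ σ : MvPolynomial (Fin n) ℝ, IsSOS σ → 0 ≤ ∫ x, eval x σ * eval x f ∂μ := by
  constructor
  · -- easy direction
    intro hf σ hσ
    apply integral_nonneg_of_ae
    have h0 : μ Sᶜ = 0 := by
      rw [← hsupp]; exact Stmt1Aux.msupport_compl_null μ
    have hsub : {x : Fin n → ℝ | ¬ (0 ≤ eval x σ * eval x f)} ⊆ Sᶜ := by
      intro x hx
      simp only [Set.mem_setOf_eq, not_le] at hx
      intro hxS
      exact absurd (mul_nonneg (Stmt1Aux.sos_eval_nonneg hσ x) (hf x hxS)) (not_le.2 hx)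
    have : μ {x : Fin n → ℝ | ¬ (0 ≤ eval x σ * eval x f)} = 0 :=
      measure_mono_null hsub h0
    exact (MeasureTheory.ae_iff).2 this
  · -- hard direction
    intro hmom x₀ hx₀S
    by_contra hneg
    push_neg at hneg
    obtain ⟨c, hc⟩ : ∃ c : ℝ, c = -eval x₀ f := ⟨_, rfl⟩
    have hc0 : 0 < c := by rw [hc]; linarith
    obtain ⟨t, htdef⟩ : ∃ t : ℝ, t = 1/(4*((n:ℝ)+1)) := ⟨_, rfl⟩
    have hn0 : (0:ℝ) ≤ (n:ℝ) := Nat.cast_nonneg n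
    have ht0 : 0 < t := by rw [htdef]; positivity
    have ht14 : t ≤ 1/4 := by
      rw [htdef, div_le_div_iff₀ (by positivity) (by norm_num)]
      linarith
    have ht2 : 2*t ≤ 1/(2*((n:ℝ)+1)) := by
      rw [htdef]
      apply le_of_eq
      rw [eq_div_iff (by positivity)]
      field_simp
      ring
    -- find the ball where f < -c/2
    have hopen : IsOpen {x : Fin n → ℝ | eval x f < -(c/2)} :=
      isOpen_lt (MvPolynomial.continuous_eval f) continuous_const
    have hx₀mem : x₀ ∈ {x : Fin n → ℝ | eval x f < -(c/2)} := by
      simp only [Set.mem_setOf_eq]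
      rw [show eval x₀ f = -c by rw [hc]; ring]
      linarith
    obtain ⟨r, hr0, hball⟩ := Metric.isOpen_iff.1 hopen x₀ hx₀mem
    obtain ⟨ρ, hρdef⟩ : ∃ ρ : ℝ, ρ = min (r/2) 1 := ⟨_, rfl⟩
    have hρ0 : 0 < ρ := by rw [hρdef]; exact lt_min (by linarith) one_pos
    have hρ1 : ρ ≤ 1 := by rw [hρdef]; exact min_le_right _ _
    have htρ : t*ρ ≤ 1 := by
      nlinarith [mul_le_mul ht14 hρ1 hρ0.le (by norm_num : (0:ℝ) ≤ 1/4)]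
    have htρ0 : 0 < t*ρ := by positivity
    have hcb : Metric.closedBall x₀ ρ ⊆ {x : Fin n → ℝ | eval x f < -(c/2)} := by
      refine (Metric.closedBall_subset_ball ?_).trans hball
      have h1 : ρ ≤ r/2 := by rw [hρdef]; exact min_le_left _ _
      linarith
    obtain ⟨ρ', hρ'def⟩ : ∃ ρ' : ℝ, ρ' = ρ/(4*((n:ℝ)+1)) := ⟨_, rfl⟩
    have hρ'0 : 0 < ρ' := by rw [hρ'def]; positivity
    have hρ'ρ : ρ' ≤ ρ := by
      rw [hρ'def, div_le_iff₀ (by positivity)]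
      nlinarith [mul_nonneg hρ0.le hn0]
    have htρ' : t*ρ' ≤ 1 := by nlinarith
    -- key constants
    obtain ⟨L, hL⟩ : ∃ L : ℝ, L = t - t^3*ρ'^2/4 := ⟨_, rfl⟩
    have hLeq : L = t * (1 - (t*ρ')^2/4) := by rw [hL]; ring
    have hL0 : 0 < L := by
      rw [hLeq]
      have h1 : (t*ρ')^2 ≤ 1 := by nlinarith [mul_pos ht0 hρ'0]
      nlinarith [mul_le_mul_of_nonneg_left h1 ht0.le]
    obtain ⟨βc, hβ⟩ : ∃ b : ℝ, b = L^(2*n) := ⟨_, rfl⟩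
    have hβ0 : 0 < βc := by rw [hβ]; positivity
    obtain ⟨A, hA⟩ : ∃ A : ℝ, A = t*(1 - (t*ρ)^2/20) := ⟨_, rfl⟩
    have hA0 : 0 ≤ A := by
      rw [hA]
      have h1 : (t*ρ)^2 ≤ 1 := by nlinarith [mul_pos ht0 hρ0]
      nlinarith [mul_le_mul_of_nonneg_left h1 ht0.le]
    obtain ⟨out, hout⟩ : ∃ o : ℝ, o = A^2 * t^(2*(n-1)) := ⟨_, rfl⟩
    have hout0 : 0 ≤ out := by rw [hout]; positivity
    -- the gap
    have hgap : out < βc := by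
      rcases Nat.eq_zero_or_pos n with hn | hn
      · subst hn
        rw [hout, hβ]
        norm_num
        have hAt : A ≤ t := by rw [hA]; nlinarith
        rw [abs_of_nonneg hA0]
        linarith
      · have hb' : (0:ℝ) < (t*ρ')^2/4 := by positivity
        have h1 : 1 - (2*(n:ℝ))*((t*ρ')^2/4) ≤ (1 - (t*ρ')^2/4)^(2*n) := by
          have := one_add_mul_le_pow (a := -((t*ρ')^2/4)) (by nlinarith) (2*n)
          push_cast at this
          calc 1 - (2*(n:ℝ))*((t*ρ')^2/4) = 1 + (2*(n:ℝ))*(-((t*ρ')^2/4)) := by ring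
            _ ≤ (1 + -((t*ρ')^2/4))^(2*n) := this
            _ = (1 - (t*ρ')^2/4)^(2*n) := by ring_nf
        have e2 : (t*ρ')^2 = (t*ρ)^2/(16*((n:ℝ)+1)^2) := by
          rw [hρ'def]
          field_simp
          ring
        have hcast : (1:ℝ) ≤ (n:ℝ) := by exact_mod_cast hn
        have h2 : (2*(n:ℝ))*((t*ρ')^2/4) < (2*((t*ρ)^2/20) - ((t*ρ)^2/20)^2) := by
          rw [e2]
          have hnsq : (n:ℝ) ≤ ((n:ℝ)+1)^2 := by nlinarith
          have ha1 : (t*ρ)^2 ≤ 1 := by nlinarith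
          have ha0 : 0 < (t*ρ)^2 := by positivity
          have key : (2*(n:ℝ))*((t*ρ)^2/(16*((n:ℝ)+1)^2)/4) ≤ (t*ρ)^2/32 := by
            rw [div_div, ← mul_div_assoc,
              div_le_div_iff₀ (by positivity : (0:ℝ) < 16*((n:ℝ)+1)^2*4) (by norm_num : (0:ℝ) < 32)]
            nlinarith [mul_le_mul_of_nonneg_left hnsq ha0.le]
          refine key.trans_lt ?_
          nlinarith
        have h3 : (1 - (t*ρ)^2/20)^2 < (1 - (t*ρ')^2/4)^(2*n) := by
          have : (1 - (t*ρ)^2/20)^2 = 1 - (2*((t*ρ)^2/20) - ((t*ρ)^2/20)^2) := by ring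
          rw [this]
          refine lt_of_lt_of_le ?_ h1
          linarith
        -- multiply by t^(2n)
        have e4 : out = t^(2*n) * (1 - (t*ρ)^2/20)^2 := by
          rw [hout, hA]
          have : 2*n = 2 + 2*(n-1) := by omega
          rw [this, pow_add]
          ring
        have e5 : βc = t^(2*n) * (1 - (t*ρ')^2/4)^(2*n) := by
          rw [hβ, hLeq, mul_pow]
        rw [e4, e5]
        apply mul_lt_mul_of_pos_left h3 (by positivity)
    -- the bump function
    obtain ⟨hf', hhf⟩ : ∃ g : (Fin n → ℝ) → ℝ, g = fun x => ∏ i, (Stmt1Aux.usin t (x i - x₀ i))^2 := ⟨_, rfl⟩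
    have hf'0 : ∀ x, 0 ≤ hf' x := by rw [hhf]; exact fun x => Stmt1Aux.hfun_nonneg t x₀ x
    have hlow : ∀ x ∈ Metric.closedBall x₀ ρ', βc ≤ hf' x := by
      intro x hx
      rw [hhf]
      have hcoord : ∀ i, |x i - x₀ i| ≤ ρ' := by
        intro i
        have h1 := dist_le_pi_dist x x₀ i
        rw [Real.dist_eq] at h1
        exact h1.trans (Metric.mem_closedBall.1 hx)
      have hterm : ∀ i, L^2 ≤ (Stmt1Aux.usin t (x i - x₀ i))^2 := by
        intro i
        have h1 : t*|x i - x₀ i| ≤ 1 := by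
          have := hcoord i
          nlinarith [abs_nonneg (x i - x₀ i)]
        have h2 := Stmt1Aux.usin_lower ht0 h1
        have h3 : L ≤ t - t^3*(x i - x₀ i)^2/4 := by
          rw [hL]
          have h5 : (x i - x₀ i)^2 ≤ ρ'^2 := by
            rw [← sq_abs]
            exact pow_le_pow_left₀ (abs_nonneg _) (hcoord i) 2
          nlinarith [mul_le_mul_of_nonneg_left h5 (pow_nonneg ht0.le 3)]
        have h4 : L ≤ Stmt1Aux.usin t (x i - x₀ i) := h3.trans h2
        exact pow_le_pow_left₀ hL0.le h4 2
      calc βc = ∏ _i : Fin n, L^2 := by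
            rw [Finset.prod_const, Finset.card_univ, Fintype.card_fin, hβ, pow_mul]
        _ ≤ ∏ i, (Stmt1Aux.usin t (x i - x₀ i))^2 :=
            Finset.prod_le_prod (fun i _ => sq_nonneg L) (fun i _ => hterm i)
    have hup : ∀ x, x ∉ Metric.closedBall x₀ ρ → hf' x ≤ out := by
      intro x hx
      have hdist : ρ < dist x x₀ := by
        by_contra h
        exact hx (Metric.mem_closedBall.2 (not_lt.1 h))
      obtain ⟨i, hi⟩ : ∃ i, ρ < |x i - x₀ i| := by
        by_contra h
        push_neg at h
        have : dist x x₀ ≤ ρ := by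
          apply (dist_pi_le_iff hρ0.le).2
          intro b
          rw [Real.dist_eq]
          exact h b
        linarith
      have hterm_i : (Stmt1Aux.usin t (x i - x₀ i))^2 ≤ A^2 := by
        rw [← sq_abs]
        apply pow_le_pow_left₀ (abs_nonneg _)
        rw [hA]
        exact Stmt1Aux.usin_gap ht0 hρ0 htρ hi.le
      have hrest : ∏ j ∈ Finset.univ.erase i, (Stmt1Aux.usin t (x j - x₀ j))^2 ≤ t^(2*(n-1)) := by
        calc ∏ j ∈ Finset.univ.erase i, (Stmt1Aux.usin t (x j - x₀ j))^2
            ≤ ∏ _j ∈ Finset.univ.erase i, t^2 := by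
              apply Finset.prod_le_prod (fun j _ => sq_nonneg _)
              intro j _
              rw [← sq_abs]
              exact pow_le_pow_left₀ (abs_nonneg _) (Stmt1Aux.usin_abs_le ht0.le _) 2
          _ = t^(2*(n-1)) := by
              rw [Finset.prod_const, Finset.card_erase_of_mem (Finset.mem_univ i),
                Finset.card_univ, Fintype.card_fin, ← pow_mul]
      calc hf' x = (Stmt1Aux.usin t (x i - x₀ i))^2 *
            ∏ j ∈ Finset.univ.erase i, (Stmt1Aux.usin t (x j - x₀ j))^2 := by
            rw [hhf]
            exact (Finset.mul_prod_erase Finset.univ _ (Finset.mem_univ i)).symm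
        _ ≤ A^2 * t^(2*(n-1)) := by
            apply mul_le_mul hterm_i hrest (Finset.prod_nonneg fun j _ => sq_nonneg _) (by positivity)
        _ = out := hout.symm
    -- bootstrap: all moments of hf'^k * f against μ are nonnegative
    have hkey : ∀ k : ℕ, 0 ≤ ∫ x, (hf' x)^k * eval x f ∂μ := by
      intro k
      have h := Stmt1Aux.bootstrap hexp f x₀ ht0 ht2 hmom k 1 Stmt1Aux.isSOS_one
      rw [hhf]
      simpa using h
    -- integrability
    have hfint : Integrable (fun x => eval x f) μ := Stmt1Aux.integrable_poly hexp f
    have habs : Integrable (fun x => |eval x f|) μ := hfint.abs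
    have hint_k : ∀ k : ℕ, Integrable (fun x => (hf' x)^k * eval x f) μ := by
      intro k
      apply Integrable.mono' (habs.const_mul ((t^(2*n))^k))
      · apply Measurable.aestronglyMeasurable
        rw [hhf]
        exact ((Stmt1Aux.measurable_hfun t x₀).pow_const k).mul
          (MvPolynomial.continuous_eval f).measurable
      · apply Filter.Eventually.of_forall
        intro x
        rw [Real.norm_eq_abs, abs_mul, abs_of_nonneg (pow_nonneg (hf'0 x) k)]
        apply mul_le_mul_of_nonneg_right _ (abs_nonneg _)
        apply pow_le_pow_left₀ (hf'0 x) _ k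
        have h6 : hf' x = ∏ i, (Stmt1Aux.usin t (x i - x₀ i))^2 := by rw [hhf]
        rw [h6]
        exact Stmt1Aux.hfun_le ht0.le x₀ x
    -- positivity of the small ball measure
    have hx₀sup : x₀ ∈ msupport μ := by rw [hsupp]; exact hx₀S
    have hμB : μ (Metric.closedBall x₀ ρ') ≠ 0 := by
      have h1 := hx₀sup (Metric.ball x₀ ρ') Metric.isOpen_ball (Metric.mem_ball_self hρ'0)
      intro h0
      exact h1 (measure_mono_null Metric.ball_subset_closedBall h0)
    obtain ⟨M, hM⟩ : ∃ M : ℝ, M = (μ (Metric.closedBall x₀ ρ')).toReal := ⟨_, rfl⟩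
    have hM0 : 0 < M := by rw [hM]; exact ENNReal.toReal_pos hμB (measure_ne_top μ _)
    obtain ⟨I, hI⟩ : ∃ I : ℝ, I = ∫ x, |eval x f| ∂μ := ⟨_, rfl⟩
    have hI0 : 0 ≤ I := by rw [hI]; exact integral_nonneg fun x => abs_nonneg _
    -- pick k
    have hγ1 : out/βc < 1 := (div_lt_one hβ0).2 hgap
    obtain ⟨k, hk⟩ : ∃ k : ℕ, (out/βc)^k < (c/2)*M/(I+1) :=
      exists_pow_lt_of_lt_one (by positivity) hγ1
    -- indicator comparison
    obtain ⟨g1, hg1⟩ : ∃ g : (Fin n → ℝ) → ℝ, g = (Metric.closedBall x₀ ρ').indicator (fun _ => -(c/2) * βc^k) := ⟨_, rfl⟩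
    obtain ⟨g2, hg2⟩ : ∃ g : (Fin n → ℝ) → ℝ, g = ((Metric.closedBall x₀ ρ)ᶜ).indicator (fun x => out^k * |eval x f|) := ⟨_, rfl⟩
    have hg1int : Integrable g1 μ := by
      rw [hg1]
      exact (integrable_const _).indicator Metric.isClosed_closedBall.measurableSet
    have hg2int : Integrable g2 μ := by
      rw [hg2]
      exact (habs.const_mul (out^k)).indicator Metric.isClosed_closedBall.measurableSet.compl
    have hmono : ∀ x, (hf' x)^k * eval x f ≤ g1 x + g2 x := by
      intro x
      by_cases hx1 : x ∈ Metric.closedBall x₀ ρ'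
      · have hxρ : x ∈ Metric.closedBall x₀ ρ :=
          Metric.closedBall_subset_closedBall hρ'ρ hx1
        rw [hg1, hg2, Set.indicator_of_mem hx1, Set.indicator_of_notMem (by
          simp only [Set.mem_compl_iff, not_not]; exact hxρ)]
        have hfx : eval x f < -(c/2) := hcb hxρ
        have h1 : (hf' x)^k * eval x f ≤ βc^k * eval x f :=
          mul_le_mul_of_nonpos_right (pow_le_pow_left₀ hβ0.le (hlow x hx1) k) (by linarith)
        have h2 : βc^k * eval x f ≤ βc^k * (-(c/2)) :=
          mul_le_mul_of_nonneg_left (by linarith) (pow_nonneg hβ0.le k)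
        calc (hf' x)^k * eval x f ≤ βc^k * (-(c/2)) := h1.trans h2
          _ = -(c/2) * βc^k + 0 := by ring
      · by_cases hx2 : x ∈ Metric.closedBall x₀ ρ
        · rw [hg1, hg2, Set.indicator_of_notMem hx1, Set.indicator_of_notMem (by
            simp only [Set.mem_compl_iff, not_not]; exact hx2)]
          have hfx : eval x f < -(c/2) := hcb hx2
          have : (hf' x)^k * eval x f ≤ 0 :=
            mul_nonpos_of_nonneg_of_nonpos (pow_nonneg (hf'0 x) k) (by linarith)
          linarith
        · rw [hg1, hg2, Set.indicator_of_notMem (fun h =>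
            hx2 (Metric.closedBall_subset_closedBall hρ'ρ h)),
            Set.indicator_of_mem (Set.mem_compl hx2)]
          have h1 : (hf' x)^k * eval x f ≤ (hf' x)^k * |eval x f| :=
            mul_le_mul_of_nonneg_left (le_abs_self _) (pow_nonneg (hf'0 x) k)
          have h2 : (hf' x)^k * |eval x f| ≤ out^k * |eval x f| :=
            mul_le_mul_of_nonneg_right (pow_le_pow_left₀ (hf'0 x) (hup x hx2) k) (abs_nonneg _)
          linarith
    -- integrate
    have hcomp : (0:ℝ) ≤ -(c/2) * βc^k * M + out^k * I := by
      have h1 : ∫ x, (hf' x)^k * eval x f ∂μ ≤ ∫ x, (g1 x + g2 x) ∂μ :=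
        integral_mono (hint_k k) (hg1int.add hg2int) hmono
      have h2 : ∫ x, (g1 x + g2 x) ∂μ = (∫ x, g1 x ∂μ) + ∫ x, g2 x ∂μ :=
        integral_add hg1int hg2int
      have h3 : ∫ x, g1 x ∂μ = -(c/2) * βc^k * M := by
        rw [hg1, integral_indicator_const _ Metric.isClosed_closedBall.measurableSet, hM,
          smul_eq_mul]
        rw [measureReal_def]; ring
      have h4 : ∫ x, g2 x ∂μ ≤ out^k * I := by
        rw [hg2, integral_indicator Metric.isClosed_closedBall.measurableSet.compl]
        rw [MeasureTheory.integral_const_mul]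
        apply mul_le_mul_of_nonneg_left _ (by positivity)
        rw [hI]
        exact setIntegral_le_integral habs (Filter.Eventually.of_forall fun x => abs_nonneg _)
      have h5 := hkey k
      linarith
    -- contradiction
    have hfinal : out^k * I < (c/2) * βc^k * M := by
      have e1 : out^k = (out/βc)^k * βc^k := by
        rw [div_pow]
        field_simp
      rw [e1]
      calc (out/βc)^k * βc^k * I ≤ (out/βc)^k * βc^k * (I+1) := by
            have h0 : (0:ℝ) ≤ (out/βc)^k * βc^k := by positivity
            nlinarith
        _ < ((c/2)*M/(I+1)) * βc^k * (I+1) := by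
            apply mul_lt_mul_of_pos_right _ (by linarith)
            exact mul_lt_mul_of_pos_right hk (by positivity)
        _ = (c/2) * βc^k * M := by
            field_simp
    linarith
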